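/- The pointwise maximum (over n) of a finite family of standard interference functions f₁, …, fₙ is a standard interference function; however, the pointwise infimum of an infinite family of standard interference functions need not be a standard interference function: for K = 1, each constant function f_u(x) = u with u > 0 is a standard interference function, yet x ↦ inf_{u > 0} f_u(x) = 0 is not. -/
import Mathlib


/-- `f` is a standard interference function on `ℝ₊^K`: strictly positive on the
nonnegative orthant, monotone w.r.t. the coordinatewise order, and scalable. -/
def IsStdIF {K : ℕ} (f : (Fin K → ℝ) → ℝ) : Prop :=
  (∀ p : Fin K → ℝ, (∀ i, 0 ≤ p i) → 0 < f p) ∧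
  (∀ p q : Fin K → ℝ, (∀ i, 0 ≤ q i) → (∀ i, q i ≤ p i) → f q ≤ f p) ∧
  (∀ p : Fin K → ℝ, (∀ i, 0 ≤ p i) → ∀ α : ℝ, 1 < α → f (α • p) < α * f p)

theorem stmt5 {K n : ℕ} (hn : 0 < n) (f : Fin n → (Fin K → ℝ) → ℝ)
    (hf : ∀ i, IsStdIF (f i)) :
    IsStdIF (fun p => (Finset.univ.sup' (Finset.univ_nonempty_iff.mpr
        (Fin.pos_iff_nonempty.mp hn)) fun i => f i p)) ∧
    (∀ u : ℝ, 0 < u → IsStdIF (fun _ : Fin 1 → ℝ => u)) ∧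
    ¬ IsStdIF (fun x : Fin 1 → ℝ => ⨅ u : {u : ℝ // 0 < u}, (u : ℝ)) := by
  have hne : (Finset.univ : Finset (Fin n)).Nonempty :=
    Finset.univ_nonempty_iff.mpr (Fin.pos_iff_nonempty.mp hn)
  refine ⟨⟨?_, ?_, ?_⟩, ?_, ?_⟩
  · intro p hp
    obtain ⟨i, -⟩ := hne
    exact lt_of_lt_of_le ((hf i).1 p hp) (Finset.le_sup' (fun j => f j p) (Finset.mem_univ i))
  · intro p q hq hle
    apply Finset.sup'_le
    intro i _
    exact le_trans ((hf i).2.1 p q hq hle) (Finset.le_sup' (fun j => f j p) (Finset.mem_univ i))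
  · intro p hp α hα
    rw [Finset.sup'_lt_iff]
    intro i _
    calc f i (α • p) < α * f i p := (hf i).2.2 p hp α hα
      _ ≤ α * Finset.univ.sup' hne fun j => f j p := by
          apply mul_le_mul_of_nonneg_left (Finset.le_sup' (fun j => f j p) (Finset.mem_univ i))
          linarith
  · intro u hu
    exact ⟨fun _ _ => hu, fun _ _ _ _ => le_rfl, fun p hp α hα => by nlinarith⟩
  · intro h
    have hbdd : BddBelow (Set.range fun u : {u : ℝ // 0 < u} => (u : ℝ)) :=
      ⟨0, by rintro x ⟨u, rfl⟩; exact u.2.le⟩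
    have h0 : (⨅ u : {u : ℝ // 0 < u}, (u : ℝ)) = 0 := by
      apply le_antisymm
      · apply le_of_forall_pos_le_add
        intro ε hε
        simpa using ciInf_le hbdd (⟨ε, hε⟩ : {u : ℝ // 0 < u})
      · exact le_ciInf fun u => u.2.le
    have := h.1 (fun _ => 0) (fun _ => le_rfl)
    rw [h0] at this
    exact lt_irrefl 0 this
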